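/- Let X be a Polish space (separable, completely metrizable) with its Borel σ-algebra, let C ≥ 1 and c ≥ 0, and let (μ_n), (ν_n) be sequences of Borel probability measures on X converging weakly to Borel probability measures μ and ν respectively. Assume that for every n: (a) μ_n(A) ≤ C·ν_n(A) for every Borel set A, and (b) μ_n ≪ ν_n and ∫_X log(dμ_n/dν_n) dν_n ≥ −c, where the integrand is bounded above by log C so the integral is well defined with values in [−∞, ∞). Then μ ≪ ν and ∫_X log(dμ/dν) dν ≥ −c; in particular ν ≪ μ, so μ and ν are mutually absolutely continuous. -/

import Mathlib

open MeasureTheory Filter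
open scoped Topology ENNReal NNReal BoundedContinuousFunction

/-- The relative entropy integrand `log C - log (dμ/dν)`, as an `ℝ≥0∞`-valued function
(the integrand `log(dμ/dν)` is bounded above by `log C`, so this is the nonnegative
version of its negation shifted by `log C`). -/
noncomputable def relEntIntegrand {X : Type*} [MeasurableSpace X]
    (C : ℝ) (μ ν : Measure X) (x : X) : ENNReal :=
  ENNReal.ofReal (Real.log C - Real.log (μ.rnDeriv ν x).toReal)

/-- The statement `μ ≪ ν` and `∫ log(dμ/dν) dν ≥ -c`, for a probability measure `ν` and
`μ(A) ≤ C·ν(A)` (so that the integrand `log(dμ/dν)` is bounded above by `log C` and the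
integral is well defined with values in `[-∞, ∞)`): the density `dμ/dν` is `ν`-a.e.
nonvanishing (otherwise the integral would be `-∞`) and
`∫ (log C - log(dμ/dν)) dν ≤ log C + c`. -/
def LogDensityIntegralGe {X : Type*} [MeasurableSpace X]
    (C c : ℝ) (μ ν : Measure X) : Prop :=
  μ ≪ ν ∧ (∀ᵐ x ∂ν, μ.rnDeriv ν x ≠ 0) ∧
    ∫⁻ x, relEntIntegrand C μ ν x ∂ν ≤ ENNReal.ofReal (Real.log C + c)

namespace Statement8Aux

open scoped BoundedContinuousFunction ENNReal NNReal Topology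

/-- Clamping to `[-B, B]` moves a point closer to any point of `[-B, B]`. -/
lemma abs_clamp_sub_le (B a t : ℝ) (ht : |t| ≤ B) :
    |max (-B) (min B a) - t| ≤ |a - t| := by
  have hB0 : 0 ≤ B := (abs_nonneg t).trans ht
  have ht1 : t ≤ B := (le_abs_self t).trans ht
  have ht2 : -B ≤ t := neg_le_of_abs_le ht
  rcases le_total B a with h1 | h1
  · rw [min_eq_left h1, max_eq_right (by linarith : -B ≤ B)]
    rw [abs_of_nonneg (by linarith), abs_of_nonneg (by linarith)]
    linarith
  · rw [min_eq_right h1]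
    rcases le_total a (-B) with h2 | h2
    · rw [max_eq_left h2, abs_of_nonpos (by linarith), abs_of_nonpos (by linarith)]
      linarith
    · rw [max_eq_right h2]

/-- A mean-value type estimate for `exp` on `(-∞, B]`. -/
lemma exp_le_exp_add (B a b : ℝ) (ha : a ≤ B) (_hb : b ≤ B) :
    Real.exp a ≤ Real.exp b + Real.exp B * |a - b| := by
  rcases le_total a b with h | h
  · have h1 := Real.exp_le_exp.mpr h
    have h2 := abs_nonneg (a - b)
    have h3 := (Real.exp_pos B).le
    nlinarith
  · rw [abs_of_nonneg (by linarith)]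
    have h1 : (b - a) + 1 ≤ Real.exp (b - a) := Real.add_one_le_exp (b - a)
    have h2 : Real.exp (b - a) * Real.exp a = Real.exp b := by
      rw [← Real.exp_add]; ring_nf
    have h3 : Real.exp a ≤ Real.exp B := Real.exp_le_exp.mpr ha
    have h4 : (0:ℝ) < Real.exp a := Real.exp_pos a
    nlinarith [mul_le_mul_of_nonneg_right h1 h4.le]

variable {X : Type*} [MeasurableSpace X]

lemma integrable_of_bounded {μ : Measure X} [IsFiniteMeasure μ] {φ : X → ℝ}
    (hφ : AEStronglyMeasurable φ μ) {B : ℝ} (hB : ∀ x, |φ x| ≤ B) : Integrable φ μ :=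
  (integrable_const B).mono' hφ (ae_of_all _ fun x => by
    simpa [Real.norm_eq_abs] using hB x)

lemma rnDeriv_le_const {μ ν : Measure X} [IsFiniteMeasure μ] [SigmaFinite ν] {C : ℝ}
    (h : ∀ A : Set X, MeasurableSet A → μ A ≤ ENNReal.ofReal C * ν A) :
    μ.rnDeriv ν ≤ᵐ[ν] fun _ => ENNReal.ofReal C := by
  refine ae_le_of_forall_setLIntegral_le_of_sigmaFinite (μ.measurable_rnDeriv ν)
    fun s hs _ => ?_
  rw [setLIntegral_const]
  calc ∫⁻ x in s, μ.rnDeriv ν x ∂ν ≤ μ s := Measure.setLIntegral_rnDeriv_le s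
    _ ≤ ENNReal.ofReal C * ν s := h s hs

/-- The easy direction of the Donsker–Varadhan inequality, for measures satisfying
the entropy bound. -/
lemma dv_aux {μ ν : Measure X} [IsProbabilityMeasure μ] [IsProbabilityMeasure ν]
    {C c : ℝ} (hC : 1 ≤ C) (hc : 0 ≤ c)
    (hfC : μ.rnDeriv ν ≤ᵐ[ν] fun _ => ENNReal.ofReal C)
    (h : LogDensityIntegralGe C c μ ν)
    {φ : X → ℝ} (hφ : Measurable φ) {B : ℝ} (hB : ∀ x, |φ x| ≤ B) :
    ∫ x, φ x ∂ν ≤ Real.log (∫ x, Real.exp (φ x) ∂μ) + c := by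
  obtain ⟨hac, hne, hint⟩ := h
  set f : X → ℝ := fun x => (μ.rnDeriv ν x).toReal with hf_def
  have hf_meas : Measurable f := (μ.measurable_rnDeriv ν).ennreal_toReal
  have hC0 : (0:ℝ) < C := lt_of_lt_of_le zero_lt_one hC
  have hlogC : 0 ≤ Real.log C := Real.log_nonneg hC
  have hfpos : ∀ᵐ x ∂ν, 0 < f x := by
    filter_upwards [hne, μ.rnDeriv_lt_top ν] with x h1 h2
    exact ENNReal.toReal_pos h1 h2.ne
  have hfC' : ∀ᵐ x ∂ν, f x ≤ C := by
    filter_upwards [hfC] with x hx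
    calc f x ≤ (ENNReal.ofReal C).toReal := ENNReal.toReal_mono ENNReal.ofReal_ne_top hx
      _ = C := ENNReal.toReal_ofReal hC0.le
  set g : X → ℝ := fun x => Real.log C - Real.log (f x) with hg_def
  have hg_meas : Measurable g := measurable_const.sub (Real.measurable_log.comp hf_meas)
  have hg0 : ∀ᵐ x ∂ν, 0 ≤ g x := by
    filter_upwards [hfpos, hfC'] with x h1 h2
    have := Real.log_le_log h1 h2
    simp only [hg_def]; linarith
  have hint' : ∫⁻ x, ENNReal.ofReal (g x) ∂ν ≤ ENNReal.ofReal (Real.log C + c) := hint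
  have hg_int : Integrable g ν := by
    refine ⟨hg_meas.aestronglyMeasurable, ?_⟩
    rw [hasFiniteIntegral_iff_ofReal hg0]
    exact hint'.trans_lt ENNReal.ofReal_lt_top
  have hgint_le : ∫ x, g x ∂ν ≤ Real.log C + c := by
    rw [integral_eq_lintegral_of_nonneg_ae hg0 hg_meas.aestronglyMeasurable]
    calc (∫⁻ x, ENNReal.ofReal (g x) ∂ν).toReal
        ≤ (ENNReal.ofReal (Real.log C + c)).toReal :=
          ENNReal.toReal_mono ENNReal.ofReal_ne_top hint'
      _ = Real.log C + c := ENNReal.toReal_ofReal (by linarith)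
  have hlogf_int : Integrable (fun x => Real.log (f x)) ν := by
    have heq : (fun x => Real.log (f x)) = fun x => Real.log C - g x := by
      funext x; simp [hg_def]
    rw [heq]; exact (integrable_const _).sub hg_int
  have hlogf_ge : -c ≤ ∫ x, Real.log (f x) ∂ν := by
    have h1 : ∫ x, g x ∂ν = Real.log C - ∫ x, Real.log (f x) ∂ν := by
      rw [hg_def]
      rw [integral_sub (integrable_const _) hlogf_int, integral_const]
      simp
    linarith
  have hφ_int : Integrable φ ν := integrable_of_bounded hφ.aestronglyMeasurable hB
  set u : X → ℝ := fun x => φ x + Real.log (f x) with hu_def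
  have hu_int : Integrable u ν := hφ_int.add hlogf_int
  have hu_meas : Measurable u := hφ.add (Real.measurable_log.comp hf_meas)
  have hu_ub : ∀ᵐ x ∂ν, u x ≤ B + Real.log C := by
    filter_upwards [hfpos, hfC'] with x h1 h2
    have h3 : Real.log (f x) ≤ Real.log C := Real.log_le_log h1 h2
    have h4 := (le_abs_self (φ x)).trans (hB x)
    simp only [hu_def]; linarith
  have hexp_int : Integrable (fun x => Real.exp (u x)) ν := by
    refine (integrable_const (Real.exp (B + Real.log C))).mono'
      (Real.measurable_exp.comp hu_meas).aestronglyMeasurable ?_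
    filter_upwards [hu_ub] with x hx
    rw [Real.norm_eq_abs, abs_of_nonneg (Real.exp_pos _).le]
    exact Real.exp_le_exp.mpr hx
  have jensen : Real.exp (∫ x, u x ∂ν) ≤ ∫ x, Real.exp (u x) ∂ν :=
    convexOn_exp.map_integral_le Real.continuous_exp.continuousOn isClosed_univ
      (ae_of_all _ fun x => Set.mem_univ _) hu_int hexp_int
  have hchange : ∫ x, Real.exp (u x) ∂ν = ∫ x, Real.exp (φ x) ∂μ := by
    rw [← MeasureTheory.integral_rnDeriv_smul hac (f := fun x => Real.exp (φ x))]
    apply integral_congr_ae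
    filter_upwards [hfpos] with x hx
    rw [smul_eq_mul]
    simp only [hu_def]
    rw [Real.exp_add, Real.exp_log hx]
    ring
  have hexpφ_int : Integrable (fun x => Real.exp (φ x)) μ := by
    refine (integrable_const (Real.exp B)).mono'
      (Real.measurable_exp.comp hφ).aestronglyMeasurable (ae_of_all _ fun x => ?_)
    rw [Real.norm_eq_abs, abs_of_nonneg (Real.exp_pos _).le]
    exact Real.exp_le_exp.mpr ((le_abs_self _).trans (hB x))
  have hIpos : 0 < ∫ x, Real.exp (φ x) ∂μ := by
    have h1 : ∫ x, Real.exp (-B) ∂μ ≤ ∫ x, Real.exp (φ x) ∂μ := by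
      refine integral_mono (integrable_const _) hexpφ_int fun x => ?_
      exact Real.exp_le_exp.mpr (neg_le_of_abs_le (hB x))
    have h2 : ∫ x, Real.exp (-B) ∂μ = Real.exp (-B) := by simp
    linarith [Real.exp_pos (-B)]
  have h5 : ∫ x, u x ∂ν ≤ Real.log (∫ x, Real.exp (φ x) ∂μ) :=
    (Real.le_log_iff_exp_le hIpos).mpr (jensen.trans_eq hchange)
  have h6 : ∫ x, u x ∂ν = ∫ x, φ x ∂ν + ∫ x, Real.log (f x) ∂ν :=
    integral_add hφ_int hlogf_int
  linarith

/-- Extension of a Donsker–Varadhan type bound from bounded continuous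
to bounded measurable functions, via `L¹` approximation. -/
lemma dv_meas [TopologicalSpace X] [NormalSpace X] [BorelSpace X]
    {μ ν : Measure X} [IsProbabilityMeasure μ] [IsProbabilityMeasure ν]
    [Measure.WeaklyRegular (μ + ν)] {c : ℝ}
    (hDV : ∀ φ : X →ᵇ ℝ, ∫ x, φ x ∂ν ≤ Real.log (∫ x, Real.exp (φ x) ∂μ) + c)
    {φ : X → ℝ} (hφ : Measurable φ) {B : ℝ} (hB0 : 0 ≤ B) (hB : ∀ x, |φ x| ≤ B) :
    ∫ x, φ x ∂ν ≤ Real.log (∫ x, Real.exp (φ x) ∂μ) + c := by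
  set κ : Measure X := μ + ν with hκ_def
  haveI : Measure.WeaklyRegular κ := by rw [hκ_def]; infer_instance
  have hφκ : Integrable φ κ := integrable_of_bounded hφ.aestronglyMeasurable hB
  set I := ∫ x, Real.exp (φ x) ∂μ with hI_def
  have hexpφ_int : Integrable (fun x => Real.exp (φ x)) μ := by
    refine (integrable_const (Real.exp B)).mono'
      (Real.measurable_exp.comp hφ).aestronglyMeasurable (ae_of_all _ fun x => ?_)
    rw [Real.norm_eq_abs, abs_of_nonneg (Real.exp_pos _).le]
    exact Real.exp_le_exp.mpr ((le_abs_self _).trans (hB x))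
  have hIlb : Real.exp (-B) ≤ I := by
    have h1 : ∫ x, Real.exp (-B) ∂μ ≤ I := by
      refine integral_mono (integrable_const _) hexpφ_int fun x => ?_
      exact Real.exp_le_exp.mpr (neg_le_of_abs_le (hB x))
    simpa using h1
  have hIpos : 0 < I := lt_of_lt_of_le (Real.exp_pos _) hIlb
  have key : ∀ ε : ℝ, 0 < ε →
      ∫ x, φ x ∂ν ≤ Real.log (I + Real.exp B * ε) + c + ε := by
    intro ε hε
    obtain ⟨g, hg, _⟩ := hφκ.exists_boundedContinuous_lintegral_sub_le
      (ε := ENNReal.ofReal ε) (ENNReal.ofReal_pos.mpr hε).ne'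
    set ψfun : X → ℝ := fun x => max (-B) (min B (g x)) with hψ_def
    have hψcont : Continuous ψfun :=
      continuous_const.max (continuous_const.min g.continuous)
    have hψbd : ∀ x, ‖ψfun x‖ ≤ B := by
      intro x
      rw [Real.norm_eq_abs, abs_le]
      constructor
      · exact le_max_left _ _
      · exact max_le (by linarith) (min_le_left _ _)
    set ψ : X →ᵇ ℝ := BoundedContinuousFunction.ofNormedAddCommGroup ψfun hψcont B hψbd
      with hψ'
    have hψx : ∀ x, ψ x = max (-B) (min B (g x)) := fun x => rfl
    have hψabs : ∀ x, |ψ x| ≤ B := fun x => by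
      rw [← Real.norm_eq_abs, hψx]; exact hψbd x
    have hclamp : ∀ x, |ψ x - φ x| ≤ ‖φ x - g x‖ := by
      intro x
      rw [Real.norm_eq_abs, abs_sub_comm (φ x), hψx]
      exact abs_clamp_sub_le B (g x) (φ x) (hB x)
    have hdist : ∀ ρ : Measure X, ρ ≤ κ →
        ∫⁻ x, ENNReal.ofReal |ψ x - φ x| ∂ρ ≤ ENNReal.ofReal ε := by
      intro ρ hρ
      calc ∫⁻ x, ENNReal.ofReal |ψ x - φ x| ∂ρ
          ≤ ∫⁻ x, (‖φ x - g x‖₊ : ℝ≥0∞) ∂ρ := by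
            refine lintegral_mono fun x => ?_
            rw [show ((‖φ x - g x‖₊ : ℝ≥0∞)) = ENNReal.ofReal ‖φ x - g x‖ from (ofReal_norm _).symm]
            exact ENNReal.ofReal_le_ofReal (hclamp x)
        _ ≤ ∫⁻ x, (‖φ x - g x‖₊ : ℝ≥0∞) ∂κ := lintegral_mono' hρ le_rfl
        _ ≤ ENNReal.ofReal ε := hg
    have habsmeas : Measurable fun x => |ψ x - φ x| :=
      (ψ.continuous.measurable.sub hφ).abs
    have habsbd : ∀ x, |(|ψ x - φ x|)| ≤ 2 * B := by
      intro x
      rw [abs_abs]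
      calc |ψ x - φ x| ≤ |ψ x| + |φ x| := abs_sub _ _
        _ ≤ 2 * B := by linarith [hψabs x, hB x]
    have hreal : ∀ ρ : Measure X, IsProbabilityMeasure ρ → ρ ≤ κ →
        ∫ x, |ψ x - φ x| ∂ρ ≤ ε := by
      intro ρ hprob hρ
      rw [integral_eq_lintegral_of_nonneg_ae (ae_of_all _ fun x => abs_nonneg _)
        habsmeas.aestronglyMeasurable]
      have h1 := ENNReal.toReal_mono ENNReal.ofReal_ne_top (hdist ρ hρ)
      rwa [ENNReal.toReal_ofReal hε.le] at h1
    have hrealν := hreal ν inferInstance (Measure.le_add_left le_rfl)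
    have hrealμ := hreal μ inferInstance (Measure.le_add_right le_rfl)
    have hφν_int : Integrable φ ν := integrable_of_bounded hφ.aestronglyMeasurable hB
    have hψν_int : Integrable (fun x => ψ x) ν := ψ.integrable ν
    have habs_intν : Integrable (fun x => |ψ x - φ x|) ν :=
      integrable_of_bounded habsmeas.aestronglyMeasurable habsbd
    have habs_intμ : Integrable (fun x => |ψ x - φ x|) μ :=
      integrable_of_bounded habsmeas.aestronglyMeasurable habsbd
    have step1 : ∫ x, φ x ∂ν ≤ ∫ x, ψ x ∂ν + ε := by
      have h1 : ∫ x, φ x ∂ν - ∫ x, ψ x ∂ν = ∫ x, (φ x - ψ x) ∂ν :=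
        (integral_sub hφν_int hψν_int).symm
      have h2 : ∫ x, (φ x - ψ x) ∂ν ≤ ∫ x, |ψ x - φ x| ∂ν := by
        refine integral_mono (hφν_int.sub hψν_int) habs_intν fun x => ?_
        rw [abs_sub_comm]
        exact le_abs_self _
      linarith [hrealν]
    have hexpψ_int : Integrable (fun x => Real.exp (ψ x)) μ := by
      refine (integrable_const (Real.exp B)).mono'
        (Real.measurable_exp.comp ψ.continuous.measurable).aestronglyMeasurable
        (ae_of_all _ fun x => ?_)
      rw [Real.norm_eq_abs, abs_of_nonneg (Real.exp_pos _).le]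
      exact Real.exp_le_exp.mpr ((le_abs_self _).trans (hψabs x))
    have step2 : ∫ x, Real.exp (ψ x) ∂μ ≤ I + Real.exp B * ε := by
      have hpt : ∀ x, Real.exp (ψ x) ≤ Real.exp (φ x) + Real.exp B * |ψ x - φ x| :=
        fun x => exp_le_exp_add B _ _ ((le_abs_self _).trans (hψabs x))
          ((le_abs_self _).trans (hB x))
      calc ∫ x, Real.exp (ψ x) ∂μ
          ≤ ∫ x, (Real.exp (φ x) + Real.exp B * |ψ x - φ x|) ∂μ :=
            integral_mono hexpψ_int (hexpφ_int.add (habs_intμ.const_mul _)) hpt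
        _ = I + Real.exp B * ∫ x, |ψ x - φ x| ∂μ := by
            rw [integral_add hexpφ_int (habs_intμ.const_mul _), integral_const_mul]
        _ ≤ I + Real.exp B * ε := by
            have := mul_le_mul_of_nonneg_left hrealμ (Real.exp_pos B).le
            linarith
    have hψIpos : 0 < ∫ x, Real.exp (ψ x) ∂μ := by
      have h1 : ∫ x, Real.exp (-B) ∂μ ≤ ∫ x, Real.exp (ψ x) ∂μ := by
        refine integral_mono (integrable_const _) hexpψ_int fun x => ?_
        exact Real.exp_le_exp.mpr (neg_le_of_abs_le (hψabs x))
      have h2 : ∫ x, Real.exp (-B) ∂μ = Real.exp (-B) := by simp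
      linarith [Real.exp_pos (-B)]
    have h3 := hDV ψ
    have h4 : Real.log (∫ x, Real.exp (ψ x) ∂μ) ≤ Real.log (I + Real.exp B * ε) :=
      Real.log_le_log hψIpos step2
    linarith
  have htend : Tendsto (fun ε : ℝ => Real.log (I + Real.exp B * ε) + c + ε)
      (𝓝[>] (0:ℝ)) (𝓝 (Real.log I + c)) := by
    have h0 : ContinuousAt (fun ε : ℝ => I + Real.exp B * ε) 0 := by fun_prop
    have h1 : ContinuousAt (fun ε : ℝ => Real.log (I + Real.exp B * ε) + c + ε) 0 := by
      have hlog : ContinuousAt Real.log (I + Real.exp B * 0) :=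
        Real.continuousAt_log (by simp [hIpos.ne'])
      have hcomp : ContinuousAt (fun ε : ℝ => Real.log (I + Real.exp B * ε)) 0 :=
        ContinuousAt.comp (f := fun ε : ℝ => I + Real.exp B * ε) hlog h0
      exact (hcomp.add continuousAt_const).add continuousAt_id
    have h2 := h1.tendsto.mono_left (nhdsWithin_le_nhds (s := Set.Ioi (0:ℝ)))
    simpa using h2
  refine ge_of_tendsto htend ?_
  filter_upwards [self_mem_nhdsWithin] with ε hε
  exact key ε hε

end Statement8Aux

open Statement8Aux

/-- Let `X` be a Polish space with its Borel σ-algebra, `C ≥ 1`,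
`c ≥ 0`, and let `(μ_n)`, `(ν_n)` be Borel probability measures converging weakly to
`μ` and `ν` respectively, such that for every `n`: (a) `μ_n(A) ≤ C·ν_n(A)` for every
Borel set `A`, and (b) `μ_n ≪ ν_n` with `∫ log(dμ_n/dν_n) dν_n ≥ -c`. Then `μ ≪ ν`
with `∫ log(dμ/dν) dν ≥ -c`; in particular `ν ≪ μ`, so `μ` and `ν` are mutually
absolutely continuous. -/
theorem statement8 {X : Type*} [TopologicalSpace X] [PolishSpace X]
    [MeasurableSpace X] [BorelSpace X]
    (C c : ℝ) (hC : 1 ≤ C) (hc : 0 ≤ c)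
    (μ ν : ℕ → ProbabilityMeasure X) (μlim νlim : ProbabilityMeasure X)
    (hμ : Tendsto μ atTop (nhds μlim)) (hν : Tendsto ν atTop (nhds νlim))
    (hle : ∀ n, ∀ A : Set X, MeasurableSet A →
      (μ n : Measure X) A ≤ ENNReal.ofReal C * (ν n : Measure X) A)
    (hent : ∀ n, LogDensityIntegralGe C c (μ n : Measure X) (ν n : Measure X)) :
    LogDensityIntegralGe C c (μlim : Measure X) (νlim : Measure X) ∧
      (νlim : Measure X) ≪ (μlim : Measure X) := by
  letI := TopologicalSpace.upgradeIsCompletelyMetrizable X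
  have hC0 : (0:ℝ) < C := lt_of_lt_of_le zero_lt_one hC
  have hCtop : ENNReal.ofReal C ≠ ⊤ := ENNReal.ofReal_ne_top
  have hCne0 : ENNReal.ofReal C ≠ 0 := (ENNReal.ofReal_pos.mpr hC0).ne'
  have hlogC : 0 ≤ Real.log C := Real.log_nonneg hC
  -- per-n measure domination
  have hleM : ∀ n, (μ n : Measure X) ≤ ENNReal.ofReal C • (ν n : Measure X) := by
    intro n
    rw [Measure.le_iff]
    intro s hs
    simpa [smul_eq_mul] using hle n s hs
  -- limit measure domination on closed sets
  have hclosed : ∀ F : Set X, IsClosed F →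
      (μlim : Measure X) F ≤ ENNReal.ofReal C * (νlim : Measure X) F := by
    intro F hF
    set δs : ℕ → ℝ := fun n => (1 : ℝ)/(n+1) with hδs
    have δs_pos : ∀ n, 0 < δs n := fun n => by positivity
    have δs_lim : Tendsto δs atTop (𝓝 0) := tendsto_one_div_add_atTop_nhds_zero_nat
    have hμt := tendsto_lintegral_thickenedIndicator_of_isClosed
      (μlim : Measure X) hF δs_pos δs_lim
    have hνt := ENNReal.Tendsto.const_mul (a := ENNReal.ofReal C) (tendsto_lintegral_thickenedIndicator_of_isClosed
      (νlim : Measure X) hF δs_pos δs_lim) (Or.inr ENNReal.ofReal_ne_top)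
    refine le_of_tendsto_of_tendsto' hμt hνt fun n => ?_
    -- fixed thickening radius: use weak convergence
    have h1 := ProbabilityMeasure.tendsto_iff_forall_lintegral_tendsto.mp hμ
      (thickenedIndicator (δs_pos n) F)
    have h2 := ENNReal.Tendsto.const_mul (a := ENNReal.ofReal C) (ProbabilityMeasure.tendsto_iff_forall_lintegral_tendsto.mp hν
      (thickenedIndicator (δs_pos n) F)) (Or.inr ENNReal.ofReal_ne_top)
    refine le_of_tendsto_of_tendsto' h1 h2 fun m => ?_
    calc ∫⁻ x, (thickenedIndicator (δs_pos n) F x : ℝ≥0∞) ∂(μ m : Measure X)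
        ≤ ∫⁻ x, (thickenedIndicator (δs_pos n) F x : ℝ≥0∞)
            ∂(ENNReal.ofReal C • (ν m : Measure X)) := lintegral_mono' (hleM m) le_rfl
      _ = ENNReal.ofReal C *
            ∫⁻ x, (thickenedIndicator (δs_pos n) F x : ℝ≥0∞) ∂(ν m : Measure X) :=
          lintegral_smul_measure _ _
  -- limit measure domination on all measurable sets
  have hlimle : ∀ A : Set X, MeasurableSet A →
      (μlim : Measure X) A ≤ ENNReal.ofReal C * (νlim : Measure X) A := by
    intro A _
    have hopen : ∀ U : Set X, IsOpen U →
        (μlim : Measure X) U ≤ ENNReal.ofReal C * (νlim : Measure X) U := by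
      intro U hU
      refine le_of_forall_lt fun r hr => ?_
      obtain ⟨F, hFU, hFc, hrF⟩ := hU.exists_lt_isClosed hr
      exact hrF.trans_le ((hclosed F hFc).trans
        (mul_le_mul_right (measure_mono hFU) _))
    refine ENNReal.le_of_forall_pos_le_add fun ε hε _ => ?_
    have hεC : (0:ℝ≥0∞) < (ε : ℝ≥0∞) / ENNReal.ofReal C :=
      ENNReal.div_pos (by exact_mod_cast hε.ne') hCtop
    obtain ⟨U, hAU, hUopen, hU⟩ := Set.exists_isOpen_lt_of_lt A
      ((νlim : Measure X) A + (ε : ℝ≥0∞) / ENNReal.ofReal C)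
      (ENNReal.lt_add_right (measure_ne_top _ _) hεC.ne')
    calc (μlim : Measure X) A ≤ (μlim : Measure X) U := measure_mono hAU
      _ ≤ ENNReal.ofReal C * (νlim : Measure X) U := hopen U hUopen
      _ ≤ ENNReal.ofReal C * ((νlim : Measure X) A + (ε : ℝ≥0∞) / ENNReal.ofReal C) :=
          mul_le_mul_right hU.le _
      _ = ENNReal.ofReal C * (νlim : Measure X) A
            + ENNReal.ofReal C * ((ε : ℝ≥0∞) / ENNReal.ofReal C) := mul_add _ _ _
      _ ≤ ENNReal.ofReal C * (νlim : Measure X) A + ε := by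
          gcongr
          rw [ENNReal.mul_div_cancel' (fun h => absurd h hCne0) (fun h => absurd h hCtop)]
  -- absolute continuity of the limit
  have hacl : (μlim : Measure X) ≪ (νlim : Measure X) := by
    refine Measure.AbsolutelyContinuous.mk fun s hs h0 => ?_
    have h1 := hlimle s hs
    rw [h0, mul_zero] at h1
    exact le_zero_iff.mp h1
  have hfCl : (μlim : Measure X).rnDeriv (νlim : Measure X)
      ≤ᵐ[(νlim : Measure X)] fun _ => ENNReal.ofReal C := rnDeriv_le_const hlimle
  -- Donsker-Varadhan bound at the limit, for bounded continuous functions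
  have hDVb : ∀ φ : X →ᵇ ℝ, ∫ x, φ x ∂(νlim : Measure X) ≤
      Real.log (∫ x, Real.exp (φ x) ∂(μlim : Measure X)) + c := by
    intro φ
    have hcont : Continuous fun x => Real.exp (φ x) :=
      Real.continuous_exp.comp φ.continuous
    have hbd : ∀ x, ‖Real.exp (φ x)‖ ≤ Real.exp ‖φ‖ := by
      intro x
      rw [Real.norm_eq_abs, abs_of_nonneg (Real.exp_pos _).le]
      refine Real.exp_le_exp.mpr ((le_abs_self _).trans ?_)
      rw [← Real.norm_eq_abs]
      exact φ.norm_coe_le_norm x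
    set eφ : X →ᵇ ℝ := BoundedContinuousFunction.ofNormedAddCommGroup
      (fun x => Real.exp (φ x)) hcont (Real.exp ‖φ‖) hbd with heφ
    have heφx : ∀ x, eφ x = Real.exp (φ x) := fun _ => rfl
    have h1 := ProbabilityMeasure.tendsto_iff_forall_integral_tendsto.mp hν φ
    have h2 := ProbabilityMeasure.tendsto_iff_forall_integral_tendsto.mp hμ eφ
    have hn : ∀ n, ∫ x, φ x ∂(ν n : Measure X) ≤
        Real.log (∫ x, eφ x ∂(μ n : Measure X)) + c := by
      intro n
      have hφB : ∀ x, |φ x| ≤ ‖φ‖ := fun x => by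
        rw [← Real.norm_eq_abs]; exact φ.norm_coe_le_norm x
      have := dv_aux (μ := (μ n : Measure X)) (ν := (ν n : Measure X)) hC hc
        (rnDeriv_le_const (hle n)) (hent n) φ.continuous.measurable hφB
      simpa [heφx] using this
    -- positivity of the limiting integral
    have heφ_intlim : Integrable (fun x => eφ x) (μlim : Measure X) :=
      eφ.integrable _
    have hIpos : 0 < ∫ x, eφ x ∂(μlim : Measure X) := by
      have hlb : ∫ x, Real.exp (-‖φ‖) ∂(μlim : Measure X) ≤
          ∫ x, eφ x ∂(μlim : Measure X) := by
        refine integral_mono (integrable_const _) heφ_intlim fun x => ?_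
        rw [heφx]
        refine Real.exp_le_exp.mpr (neg_le_of_abs_le ?_)
        rw [← Real.norm_eq_abs]
        exact φ.norm_coe_le_norm x
      have h2' : ∫ x, Real.exp (-‖φ‖) ∂(μlim : Measure X) = Real.exp (-‖φ‖) := by simp
      linarith [Real.exp_pos (-‖φ‖)]
    have h2' : Tendsto (fun n => Real.log (∫ x, eφ x ∂(μ n : Measure X)) + c)
        atTop (𝓝 (Real.log (∫ x, eφ x ∂(μlim : Measure X)) + c)) :=
      (h2.log hIpos.ne').add tendsto_const_nhds
    have := le_of_tendsto_of_tendsto' h1 h2' hn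
    simpa [heφx] using this
  -- Donsker-Varadhan bound for bounded measurable functions
  have hDVm : ∀ (φ : X → ℝ), Measurable φ → ∀ B : ℝ, 0 ≤ B → (∀ x, |φ x| ≤ B) →
      ∫ x, φ x ∂(νlim : Measure X) ≤
        Real.log (∫ x, Real.exp (φ x) ∂(μlim : Measure X)) + c :=
    fun φ hφ B hB0 hB => dv_meas hDVb hφ hB0 hB
  -- the rnDeriv and the vanishing set
  set f : X → ℝ≥0∞ := (μlim : Measure X).rnDeriv (νlim : Measure X) with hf_def
  have hf_meas : Measurable f := Measure.measurable_rnDeriv _ _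
  set N : Set X := {x | f x = 0} with hN_def
  have hNmeas : MeasurableSet N := hf_meas (measurableSet_singleton 0)
  have hμN : (μlim : Measure X) N = 0 := by
    rw [← Measure.setLIntegral_rnDeriv hacl]
    rw [setLIntegral_congr_fun hNmeas (fun x hx => hx)]
    simp
  have hνN : (νlim : Measure X) N = 0 := by
    by_contra h0
    have hd : 0 < ((νlim : Measure X) N).toReal :=
      ENNReal.toReal_pos h0 (measure_ne_top _ _)
    set d := ((νlim : Measure X) N).toReal with hd_def
    set M := (c+1)/d with hM_def
    have hM : 0 ≤ M := div_nonneg (by linarith) hd.le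
    have hφbd : ∀ x, |N.indicator (fun _ => M) x| ≤ M := by
      intro x
      rw [Set.indicator]
      split <;> simp [abs_of_nonneg hM, hM]
    have key := hDVm (N.indicator fun _ => M)
      (measurable_const.indicator hNmeas) M hM hφbd
    have hIν : ∫ x, N.indicator (fun _ => M) x ∂(νlim : Measure X) = d * M := by
      rw [integral_indicator_const _ hNmeas, smul_eq_mul]
      rfl
    have hIμ : ∫ x, Real.exp (N.indicator (fun _ => M) x) ∂(μlim : Measure X) = 1 := by
      have heq : (fun x => Real.exp (N.indicator (fun _ => M) x))
          = fun x => N.indicator (fun _ => Real.exp M - 1) x + 1 := by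
        funext x
        rw [Set.indicator, Set.indicator]
        split <;> simp
      rw [heq, integral_add ((integrable_const (Real.exp M - 1)).indicator hNmeas)
        (integrable_const 1), integral_indicator_const _ hNmeas, integral_const]
      simp [hμN]
    rw [hIν, hIμ, Real.log_one] at key
    have hMd : d * M = c + 1 := by
      rw [hM_def]
      field_simp
    linarith
  have hne : ∀ᵐ x ∂(νlim : Measure X), f x ≠ 0 := by
    rw [ae_iff]
    have : {x | ¬ f x ≠ 0} = N := by
      ext x; simp [hN_def]
    rwa [this]
  -- the main integral bound
  have hmain : ∫⁻ x, relEntIntegrand C (μlim : Measure X) (νlim : Measure X) x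
      ∂(νlim : Measure X) ≤ ENNReal.ofReal (Real.log C + c) := by
    set g : X → ℝ := fun x => Real.log C - Real.log (f x).toReal with hg_def
    have hg_meas : Measurable g :=
      measurable_const.sub (Real.measurable_log.comp hf_meas.ennreal_toReal)
    -- per-truncation bound from DV
    have hbound : ∀ M : ℝ, 0 ≤ M →
        ∫ x, max 0 (min (g x) M) ∂(νlim : Measure X) ≤ Real.log C + c := by
      intro M hM
      set φM : X → ℝ := fun x => max 0 (min (g x) M) - Real.log C with hφM_def
      have hmaxmeas : Measurable fun x => max 0 (min (g x) M) :=
        measurable_const.max (hg_meas.min measurable_const)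
      have hφMmeas : Measurable φM := hmaxmeas.sub measurable_const
      have hmax_nonneg : ∀ x, 0 ≤ max 0 (min (g x) M) := fun x => le_max_left _ _
      have hmax_le : ∀ x, max 0 (min (g x) M) ≤ M := fun x =>
        max_le hM (min_le_right _ _)
      have hφMbd : ∀ x, |φM x| ≤ M + Real.log C := by
        intro x
        rw [abs_le]
        constructor
        · have := hmax_nonneg x
          simp only [hφM_def]; linarith
        · have := hmax_le x
          simp only [hφM_def]; linarith
      have hDV := hDVm φM hφMmeas (M + Real.log C) (by linarith) hφMbd
      -- show ∫ exp φM dμlim ≤ 1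
      have hexpφM_meas : Measurable fun x => Real.exp (φM x) :=
        Real.measurable_exp.comp hφMmeas
      have hmul : ∀ᵐ x ∂(νlim : Measure X),
          f x * ENNReal.ofReal (Real.exp (φM x)) ≤ 1 := by
        filter_upwards [hne, hfCl, Measure.rnDeriv_lt_top (μlim : Measure X)
          (νlim : Measure X)] with x hx0 hxC hxt
        have hft : 0 < (f x).toReal := ENNReal.toReal_pos hx0 hxt.ne
        have hftC : (f x).toReal ≤ C := by
          calc (f x).toReal ≤ (ENNReal.ofReal C).toReal :=
              ENNReal.toReal_mono ENNReal.ofReal_ne_top hxC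
            _ = C := ENNReal.toReal_ofReal hC0.le
        have hg0 : 0 ≤ g x := by
          have := Real.log_le_log hft hftC
          simp only [hg_def]; linarith
        have hexp_le : Real.exp (φM x) ≤ 1 / (f x).toReal := by
          have h1 : max 0 (min (g x) M) ≤ g x := max_le hg0 (min_le_left _ _)
          have h2 : Real.exp (φM x) ≤ Real.exp (g x - Real.log C) := by
            refine Real.exp_le_exp.mpr ?_
            simp only [hφM_def]; linarith
          have h3 : Real.exp (g x - Real.log C) = 1 / (f x).toReal := by
            simp only [hg_def]
            rw [show Real.log C - Real.log (f x).toReal - Real.log C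
              = -Real.log (f x).toReal by ring]
            rw [Real.exp_neg, Real.exp_log hft]
            rw [one_div]
          linarith
        have hfx : f x = ENNReal.ofReal (f x).toReal :=
          (ENNReal.ofReal_toReal hxt.ne).symm
        rw [hfx, ← ENNReal.ofReal_mul (ENNReal.toReal_nonneg)]
        calc ENNReal.ofReal ((f x).toReal * Real.exp (φM x))
            ≤ ENNReal.ofReal ((f x).toReal * (1 / (f x).toReal)) := by
              exact ENNReal.ofReal_le_ofReal
                (mul_le_mul_of_nonneg_left hexp_le hft.le)
          _ = 1 := by
              rw [mul_one_div, div_self hft.ne']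
              exact ENNReal.ofReal_one
      have hlint : ∫⁻ x, ENNReal.ofReal (Real.exp (φM x)) ∂(μlim : Measure X) ≤ 1 := by
        rw [← MeasureTheory.lintegral_rnDeriv_mul hacl
          hexpφM_meas.ennreal_ofReal.aemeasurable]
        calc ∫⁻ x, f x * ENNReal.ofReal (Real.exp (φM x)) ∂(νlim : Measure X)
            ≤ ∫⁻ _, 1 ∂(νlim : Measure X) := lintegral_mono_ae hmul
          _ = 1 := by simp
      have hexp_le1 : ∫ x, Real.exp (φM x) ∂(μlim : Measure X) ≤ 1 := by
        rw [integral_eq_lintegral_of_nonneg_ae (ae_of_all _ fun x => (Real.exp_pos _).le)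
          hexpφM_meas.aestronglyMeasurable]
        have h1 := ENNReal.toReal_mono ENNReal.one_ne_top hlint
        simpa using h1
      have hlog : Real.log (∫ x, Real.exp (φM x) ∂(μlim : Measure X)) ≤ 0 :=
        Real.log_nonpos (integral_nonneg fun x => (Real.exp_pos _).le) hexp_le1
      have hmax_int : Integrable (fun x => max 0 (min (g x) M)) (νlim : Measure X) := by
        refine integrable_of_bounded hmaxmeas.aestronglyMeasurable (B := M) fun x => ?_
        rw [abs_of_nonneg (hmax_nonneg x)]
        exact hmax_le x
      have hintφM : ∫ x, φM x ∂(νlim : Measure X)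
          = ∫ x, max 0 (min (g x) M) ∂(νlim : Measure X) - Real.log C := by
        simp only [hφM_def]
        rw [integral_sub hmax_int (integrable_const _), integral_const]
        simp
      rw [hintφM] at hDV
      linarith
    -- lintegral bound for each natural truncation
    have hMb : ∀ n : ℕ, ∫⁻ x, ENNReal.ofReal (max 0 (min (g x) (n+1)))
        ∂(νlim : Measure X) ≤ ENNReal.ofReal (Real.log C + c) := by
      intro n
      have hb := hbound (n+1) (by positivity)
      have hmaxmeas : Measurable fun x => max 0 (min (g x) ((n:ℝ)+1)) :=
        measurable_const.max (hg_meas.min measurable_const)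
      have hfin : ∫⁻ x, ENNReal.ofReal (max 0 (min (g x) ((n:ℝ)+1)))
          ∂(νlim : Measure X) ≠ ⊤ := by
        refine ne_of_lt (lt_of_le_of_lt (lintegral_mono fun x =>
          ENNReal.ofReal_le_ofReal (max_le (by positivity) (min_le_right _ _))) ?_)
        rw [lintegral_const, measure_univ, mul_one]
        exact ENNReal.ofReal_lt_top
      have heq : ∫ x, max 0 (min (g x) ((n:ℝ)+1)) ∂(νlim : Measure X)
          = (∫⁻ x, ENNReal.ofReal (max 0 (min (g x) ((n:ℝ)+1)))
              ∂(νlim : Measure X)).toReal :=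
        integral_eq_lintegral_of_nonneg_ae (ae_of_all _ fun x => le_max_left _ _)
          hmaxmeas.aestronglyMeasurable
      rw [ENNReal.le_ofReal_iff_toReal_le hfin (by linarith), ← heq]
      exact hb
    -- monotone convergence
    have hsup : ∀ x, relEntIntegrand C (μlim : Measure X) (νlim : Measure X) x
        = ⨆ n : ℕ, ENNReal.ofReal (max 0 (min (g x) ((n:ℝ)+1))) := by
      intro x
      have hrel : relEntIntegrand C (μlim : Measure X) (νlim : Measure X) x
          = ENNReal.ofReal (g x) := rfl
      rw [hrel]
      apply le_antisymm
      · rcases le_total (g x) 0 with h | h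
        · rw [ENNReal.ofReal_of_nonpos h]
          exact bot_le
        · refine le_iSup_of_le ⌈g x⌉₊ ?_
          rw [min_eq_left (le_trans (Nat.le_ceil _) (by linarith)), max_eq_right h]
      · refine iSup_le fun n => ?_
        rcases le_total (g x) 0 with h | h
        · rw [min_eq_left (by linarith : g x ≤ (n:ℝ)+1), max_eq_left h]
          simp
        · exact ENNReal.ofReal_le_ofReal (max_le h (min_le_left _ _))
    have hmono : Monotone fun (n : ℕ) (x : X) =>
        ENNReal.ofReal (max 0 (min (g x) ((n:ℝ)+1))) := by
      intro m n hmn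
      intro x
      refine ENNReal.ofReal_le_ofReal (max_le_max le_rfl (min_le_min le_rfl ?_))
      have : (m:ℝ) ≤ n := by exact_mod_cast hmn
      linarith
    calc ∫⁻ x, relEntIntegrand C (μlim : Measure X) (νlim : Measure X) x
          ∂(νlim : Measure X)
        = ∫⁻ x, ⨆ n : ℕ, ENNReal.ofReal (max 0 (min (g x) ((n:ℝ)+1)))
            ∂(νlim : Measure X) := lintegral_congr hsup
      _ = ⨆ n : ℕ, ∫⁻ x, ENNReal.ofReal (max 0 (min (g x) ((n:ℝ)+1)))
            ∂(νlim : Measure X) := by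
          refine lintegral_iSup (fun n => ?_) hmono
          exact ENNReal.measurable_ofReal.comp
            (measurable_const.max (hg_meas.min measurable_const))
      _ ≤ ENNReal.ofReal (Real.log C + c) := iSup_le hMb
  refine ⟨⟨hacl, hne, hmain⟩, ?_⟩
  -- νlim ≪ μlim
  refine Measure.AbsolutelyContinuous.mk fun s hs h0 => ?_
  have h1 : ∫⁻ x in s, f x ∂(νlim : Measure X) = 0 := by
    rw [Measure.setLIntegral_rnDeriv hacl]
    exact h0
  rw [lintegral_eq_zero_iff hf_meas] at h1
  have h2 : ∀ᵐ x ∂(νlim : Measure X).restrict s, f x ≠ 0 := ae_restrict_of_ae hne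
  have h3 : ∀ᵐ _x ∂(νlim : Measure X).restrict s, False := by
    filter_upwards [h1, h2] with x hx1 hx2
    exact hx2 hx1
  rw [ae_iff] at h3
  simpa [Measure.restrict_apply_univ] using h3
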